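/- A k-germ ω is regular if and only if both ω and δω are nonatomic, where a j-germ is nonatomic if it vanishes on all j-simplices of zero j-dimensional volume, and regular means nonatomic and closed on every affine k-plane (the algebraic pull-back by every affine map φ: I ⊆ ℝ^k → D has vanishing coboundary). -/

import Mathlib

/-- The euclidean space `ℝ^d` in which simplices live. -/
abbrev Pt (d : ℕ) := EuclideanSpace ℝ (Fin d)

/-- The `k`-dimensional volume of a `k`-simplex `[p₀ … p_k]` in `ℝ^d`:
`vol_k(S) = (1/k!) √(det (P Pᵀ))` where `P_{ij} = (pᵢ − p₀)_j`. -/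
noncomputable def vol {d k : ℕ} (S : Fin (k + 1) → Pt d) : ℝ :=
  (1 / (Nat.factorial k : ℝ)) *
    Real.sqrt (Matrix.det (Matrix.of fun i j : Fin k =>
      ∑ m : Fin d, (S i.succ m - S 0 m) * (S j.succ m - S 0 m)))

/-- The coboundary of a germ, dual to the alternating-sum boundary operator. -/
noncomputable def cobdry {d n : ℕ} (ω : (Fin n → Pt d) → ℝ) :
    (Fin (n + 1) → Pt d) → ℝ :=
  fun T => ∑ i : Fin (n + 1), (-1 : ℝ) ^ (i : ℕ) * ω (T ∘ i.succAbove)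

/-- A `k`-germ on `D` is nonatomic if it vanishes on every `k`-simplex in `D`
(convex hull of vertices contained in `D`) of zero `k`-volume. -/
def Nonatomic {d k : ℕ} (D : Set (Pt d)) (ω : (Fin (k + 1) → Pt d) → ℝ) : Prop :=
  ∀ S : Fin (k + 1) → Pt d, convexHull ℝ (Set.range S) ⊆ D → vol S = 0 → ω S = 0

/-- A `k`-germ on `D` is closed on `k`-planes if the algebraic pull-back `φ^♮ω`
by every affine map `φ : ℝ^k → ℝ^d` has vanishing coboundary on simplices mapped
into `D`. -/
def ClosedOnPlanes {d k : ℕ} (D : Set (Pt d)) (ω : (Fin (k + 1) → Pt d) → ℝ) : Prop :=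
  ∀ φ : (Fin k → ℝ) →ᵃ[ℝ] Pt d, ∀ T : Fin (k + 2) → (Fin k → ℝ),
    convexHull ℝ (Set.range fun i => φ (T i)) ⊆ D →
      cobdry (fun S : Fin (k + 1) → Pt k => ω (fun i => φ (WithLp.ofLp (S i))))
        (fun i => WithLp.toLp 2 (T i)) = 0

open Matrix

/-- The Gram matrix of a family of vectors, as `A * Aᵀ`. -/
lemma gram_eq_mul_transpose {d n : ℕ} (v : Fin n → Pt d) :
    (Matrix.of fun i j : Fin n => ∑ m : Fin d, v i m * v j m) =
      (Matrix.of fun i m => v i m) * (Matrix.of fun (i : Fin n) (m : Fin d) => v i m)ᵀ := by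
  ext i j
  simp [Matrix.mul_apply]

lemma gram_det_nonneg {d n : ℕ} (v : Fin n → Pt d) :
    0 ≤ (Matrix.of fun i j : Fin n => ∑ m : Fin d, v i m * v j m).det := by
  rw [gram_eq_mul_transpose]
  set A : Matrix (Fin n) (Fin d) ℝ := Matrix.of fun i m => v i m
  have hA : Aᵀ = Aᴴ := (Matrix.conjTranspose_eq_transpose_of_trivial A).symm
  rw [hA]
  have hps : (A * Aᴴ).PosSemidef := Matrix.posSemidef_self_mul_conjTranspose A
  have hH := hps.1
  rw [hH.det_eq_prod_eigenvalues]
  exact Finset.prod_nonneg fun i _ => by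
    simpa using hps.eigenvalues_nonneg i

lemma vecMul_gram {d n : ℕ} (v : Fin n → Pt d) (c : Fin n → ℝ) :
    c ᵥ* ((Matrix.of fun i m => v i m) * (Matrix.of fun (i : Fin n) (m : Fin d) => v i m)ᵀ)
      = (Matrix.of fun (i : Fin n) (m : Fin d) => v i m) *ᵥ (c ᵥ* (Matrix.of fun (i : Fin n) (m : Fin d) => v i m)) := by
  rw [← Matrix.vecMul_vecMul, Matrix.vecMul_transpose]

lemma vecMul_eq_zero_iff_sum {d n : ℕ} (v : Fin n → Pt d) (c : Fin n → ℝ) :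
    c ᵥ* (Matrix.of fun (i : Fin n) (m : Fin d) => v i m) = 0 ↔ ∑ i, c i • v i = 0 := by
  have key : ∀ m : Fin d, (∑ i, c i • v i) m = ∑ i, c i * v i m := by
    intro m
    simp
  constructor
  · intro h
    ext m
    have := congrFun h m
    rw [key]
    simpa [Matrix.vecMul, dotProduct] using this
  · intro h
    funext m
    have := congrArg (fun x : Pt d => x m) h
    rw [key] at this
    simpa [Matrix.vecMul, dotProduct] using this

lemma gram_det_eq_zero_iff {d n : ℕ} (v : Fin n → Pt d) :
    (Matrix.of fun i j : Fin n => ∑ m : Fin d, v i m * v j m).det = 0 ↔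
      ¬ LinearIndependent ℝ v := by
  rw [gram_eq_mul_transpose]
  set A : Matrix (Fin n) (Fin d) ℝ := Matrix.of fun i m => v i m with hA
  constructor
  · intro hdet
    obtain ⟨c, hc0, hc⟩ := Matrix.exists_vecMul_eq_zero_iff.mpr hdet
    have hAc : c ᵥ* A = 0 := by
      have h1 : A *ᵥ (c ᵥ* A) = 0 := by rw [← vecMul_gram v c]; exact hc
      have h2 : (c ᵥ* A) ⬝ᵥ (c ᵥ* A) = 0 := by
        have := congrArg (fun w => c ⬝ᵥ w) h1
        simpa [Matrix.dotProduct_mulVec, dotProduct_zero] using this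
      exact dotProduct_self_eq_zero.mp h2
    rw [Fintype.not_linearIndependent_iff]
    refine ⟨c, (vecMul_eq_zero_iff_sum v c).mp hAc, ?_⟩
    by_contra h
    push_neg at h
    exact hc0 (funext h)
  · intro hdep
    obtain ⟨c, hsum, i, hi⟩ := Fintype.not_linearIndependent_iff.mp hdep
    refine Matrix.exists_vecMul_eq_zero_iff.mp ⟨c, fun h => hi (congrFun h i), ?_⟩
    rw [vecMul_gram v c, (vecMul_eq_zero_iff_sum v c).mpr hsum, Matrix.mulVec_zero]


lemma vol_eq_zero_iff {d n : ℕ} (S : Fin (n + 1) → Pt d) :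
    vol S = 0 ↔ ¬ LinearIndependent ℝ (fun i : Fin n => S i.succ - S 0) := by
  have hEq : (Matrix.of fun i j : Fin n =>
      ∑ m : Fin d, (S i.succ m - S 0 m) * (S j.succ m - S 0 m)) =
      (Matrix.of fun i j : Fin n =>
        ∑ m : Fin d, (S i.succ - S 0) m * (S j.succ - S 0) m) := rfl
  rw [vol, hEq, ← gram_det_eq_zero_iff (fun i : Fin n => S i.succ - S 0)]
  have hnn := gram_det_nonneg (fun i : Fin n => S i.succ - S 0)
  constructor
  · intro h
    have hf : (1 / (Nat.factorial n : ℝ)) ≠ 0 := by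
      positivity
    have := (mul_eq_zero.mp h).resolve_left hf
    have hle := Real.sqrt_eq_zero'.mp this
    exact le_antisymm hle hnn
  · intro h
    rw [h, Real.sqrt_zero, mul_zero]

/-- A `k`-germ `ω` is regular (nonatomic and closed on `k`-planes) if and only if
both `ω` and `δω` are nonatomic. -/
theorem regular_iff_nonatomic {d k : ℕ} (D : Set (Pt d))
    (ω : (Fin (k + 1) → Pt d) → ℝ) :
    (Nonatomic D ω ∧ ClosedOnPlanes D ω) ↔
      (Nonatomic D ω ∧ Nonatomic D (cobdry ω)) := by
  constructor
  · rintro ⟨hna, hcl⟩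
    refine ⟨hna, ?_⟩
    intro S hhull hvol
    have hdep : ¬ LinearIndependent ℝ (fun i : Fin (k + 1) => S i.succ - S 0) :=
      (vol_eq_zero_iff S).mp hvol
    obtain ⟨g, hg, i₀, hi₀⟩ := Fintype.not_linearIndependent_iff.mp hdep
    set v : Fin (k + 1) → Pt d := fun i => S i.succ - S 0 with hv
    set w : Fin k → Pt d := v ∘ i₀.succAbove with hw
    set W : Submodule ℝ (Pt d) := Submodule.span ℝ (Set.range w) with hW
    have hne : ∀ j, j ≠ i₀ → v j ∈ W := by
      intro j hj
      obtain ⟨m, hm⟩ := Fin.exists_succAbove_eq hj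
      exact Submodule.subset_span ⟨m, by simp [hw, hm]⟩
    have hvW : ∀ j, v j ∈ W := by
      intro j
      by_cases hj : j = i₀
      · subst hj
        have hsplit : g j • v j + ∑ i ∈ Finset.univ.erase j, g i • v i = 0 :=
          (Finset.add_sum_erase Finset.univ (fun i => g i • v i)
            (Finset.mem_univ j)).trans hg
        have h1 : g j • v j = -∑ i ∈ Finset.univ.erase j, g i • v i :=
          eq_neg_of_add_eq_zero_left hsplit
        have h2 : v j = (g j)⁻¹ • (g j • v j) := by
          rw [smul_smul, inv_mul_cancel₀ hi₀, one_smul]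
        rw [h2, h1]
        refine W.smul_mem _ (W.neg_mem (Submodule.sum_mem _ fun i hi => ?_))
        exact W.smul_mem _ (hne i (Finset.mem_erase.mp hi).1)
      · exact hne j hj
    let ℓ : (Fin k → ℝ) →ₗ[ℝ] Pt d :=
      { toFun := fun c => ∑ j, c j • w j
        map_add' := by intro a b; simp [add_smul, Finset.sum_add_distrib]
        map_smul' := by intro r a; simp [smul_smul, Finset.smul_sum] }
    have hrange : W ≤ LinearMap.range ℓ := by
      rw [hW, Submodule.span_le]
      rintro x ⟨j, rfl⟩
      refine ⟨Pi.single j 1, ?_⟩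
      have hℓ : ℓ (Pi.single j (1 : ℝ)) = ∑ m, (Pi.single j (1 : ℝ) : Fin k → ℝ) m • w m := rfl
      rw [hℓ]
      simp [Pi.single_apply, ite_smul]
    have hmem : ∀ i : Fin (k + 2), S i - S 0 ∈ LinearMap.range ℓ := by
      intro i
      refine hrange ?_
      induction i using Fin.cases with
      | zero => simp only [sub_self]; exact W.zero_mem
      | succ j => exact hvW j
    choose T' hT' using fun i => hmem i
    let φ : (Fin k → ℝ) →ᵃ[ℝ] Pt d :=
      { toFun := fun x => S 0 + ℓ x
        linear := ℓ
        map_vadd' := by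
          intro p u
          show S 0 + ℓ (u + p) = ℓ u + (S 0 + ℓ p)
          rw [map_add]; abel }
    have hφ : ∀ i, φ (T' i) = S i := by
      intro i
      show S 0 + ℓ (T' i) = S i
      rw [hT']; abel
    have hh : convexHull ℝ (Set.range fun i => φ (T' i)) ⊆ D := by
      have : (Set.range fun i => φ (T' i)) = Set.range S :=
        congrArg Set.range (funext hφ)
      rw [this]; exact hhull
    have h0 := hcl φ T' hh
    have hkey : cobdry ω S =
        cobdry (fun S' : Fin (k + 1) → Pt k => ω fun i => φ (WithLp.ofLp (S' i)))
          (fun i => WithLp.toLp 2 (T' i)) := by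
      unfold cobdry
      refine Finset.sum_congr rfl fun i _ => ?_
      have hc : S ∘ i.succAbove = fun j => φ (T' (i.succAbove j)) :=
        funext fun j => (hφ (i.succAbove j)).symm
      exact congrArg (fun x => (-1 : ℝ) ^ (i : ℕ) * x) (congrArg ω hc)
    rw [hkey]
    exact h0
  · rintro ⟨hna, hnb⟩
    refine ⟨hna, ?_⟩
    intro φ T hhull
    have heq : cobdry (fun S' : Fin (k + 1) → Pt k => ω fun i => φ (WithLp.ofLp (S' i)))
        (fun i => WithLp.toLp 2 (T i)) =
        cobdry ω (fun i => φ (T i)) := rfl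
    rw [heq]
    refine hnb _ hhull ?_
    rw [vol_eq_zero_iff]
    intro hind
    have hmem : ∀ i : Fin (k + 1),
        (fun i : Fin (k + 2) => φ (T i)) i.succ - (fun i : Fin (k + 2) => φ (T i)) 0 ∈
          LinearMap.range φ.linear := by
      intro i
      exact ⟨T i.succ - T 0, by
        simpa [vsub_eq_sub] using φ.linearMap_vsub (T i.succ) (T 0)⟩
    let u : Fin (k + 1) → LinearMap.range φ.linear := fun i => ⟨_, hmem i⟩
    have hu : LinearIndependent ℝ u :=
      LinearIndependent.of_comp (LinearMap.range φ.linear).subtype hind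
    have hcard := hu.fintype_card_le_finrank
    have hle : Module.finrank ℝ (LinearMap.range φ.linear) ≤ k := by
      simpa [Module.finrank_fin_fun] using LinearMap.finrank_range_le φ.linear
    simp only [Fintype.card_fin] at hcard
    omega
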